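/- Under the assumptions: F is differentiable, L-smooth and μ-strongly convex; each G_j is convex and c-Lipschitz; H = F + G has the unique minimizer x*; and the stepsizes are α^{(k)} = 2μ/(μ²k + 12L²) with β^{(k)} = m·α^{(k)}. Then the BlockProx iterates satisfy, for every k ≥ 0: E‖x^{(k)} − x*‖² ≤ A/(μ²k + 12L²), where A = max{ 12L²·‖x^{(0)} − x*‖², (μ² + 12L²)·E‖x^{(1)} − x*‖², 4·(1 + 12L²/μ²)·7m²c² }. -/

import Mathlib

open scoped RealInnerProductSpace
section Helpers

lemma norm_sq_coord {ι : Type*} [Fintype ι] (y : EuclideanSpace ℝ ι) :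
    ‖y‖ ^ 2 = ∑ i, (y i) ^ 2 := by
  rw [EuclideanSpace.norm_eq, Real.sq_sqrt (by positivity)]
  simp [Real.norm_eq_abs, sq_abs]

lemma sum_fun_eval {n m : ℕ} (i : Fin n) (φ : Fin m → ℝ) :
    ∑ j : Fin n → Fin m, φ (j i) = (m : ℝ) ^ (n - 1) * ∑ v, φ v := by
  classical
  calc ∑ j : Fin n → Fin m, φ (j i)
      = ∑ p : Fin m × ({a : Fin n // a ≠ i} → Fin m), φ p.1 := by
        rw [← Equiv.sum_comp (Equiv.funSplitAt i (Fin m)).symm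
          (fun j : Fin n → Fin m => φ (j i))]
        refine Fintype.sum_congr _ _ fun p => ?_
        simp [Equiv.funSplitAt, Equiv.piSplitAt]
    _ = ∑ v : Fin m, ∑ _r : {a : Fin n // a ≠ i} → Fin m, φ v := by
        rw [Fintype.sum_prod_type]
    _ = (m : ℝ) ^ (n - 1) * ∑ v, φ v := by
        simp [Finset.sum_const, Fintype.card_fun, Fintype.card_subtype_compl,
          Finset.mul_sum, mul_comm, Finset.sum_mul]


variable {E : Type*} [NormedAddCommGroup E] [InnerProductSpace ℝ E]

lemma prox_inner_le (Gv : E → ℝ) (hconv : ConvexOn ℝ Set.univ Gv) (β : ℝ) (hβ : 0 < β)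
    (z p : E) (hmin : IsMinOn (fun u => Gv u + (1/(2*β)) * ‖z-u‖^2) Set.univ p)
    (y : E) : ⟪z - p, y - p⟫ ≤ β * (Gv y - Gv p) := by
  set I := (⟪z - p, y - p⟫ : ℝ) with hI
  set N := ‖y - p‖ ^ 2 with hNdef
  have hN : 0 ≤ N := sq_nonneg _
  have key : ∀ s : ℝ, 0 < s → s ≤ 1 → I ≤ β * (Gv y - Gv p) + (s/2) * N := by
    intro s hs hs1
    have hmem := isMinOn_iff.mp hmin ((1-s) • p + s • y) (Set.mem_univ _)
    have hcv := hconv.2 (Set.mem_univ p) (Set.mem_univ y)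
      (show (0:ℝ) ≤ 1 - s by linarith) hs.le (by ring : (1 - s) + s = 1)
    have hptdist : z - ((1-s) • p + s • y) = (z - p) - s • (y - p) := by
      rw [smul_sub, sub_smul, one_smul]; abel
    have hnormexp : ‖z - ((1-s) • p + s • y)‖^2
        = ‖z - p‖^2 - 2 * (s * I) + s^2 * N := by
      rw [hptdist, norm_sub_sq_real, real_inner_smul_right, norm_smul,
        Real.norm_eq_abs, mul_pow, sq_abs, hI, hNdef]
    rw [hnormexp] at hmem
    have h2β : (0:ℝ) < 2 * β := by linarith
    have hmem2 : Gv p + (1/(2*β)) * ‖z-p‖^2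
        ≤ (1-s) * Gv p + s * Gv y + (1/(2*β)) * (‖z - p‖^2 - 2 * (s * I) + s^2 * N) := by
      calc Gv p + (1/(2*β)) * ‖z-p‖^2 ≤ _ := hmem
        _ ≤ _ := by
          have := hcv
          simp only [smul_eq_mul] at this
          linarith
    have hfield : (1/(2*β)) * (2*β) = 1 := by field_simp
    -- multiply out
    have hpoly : 0 ≤ s * (Gv y - Gv p) * (2*β) + (- 2 * (s * I) + s^2 * N) := by
      nlinarith [hmem2, hfield, mul_pos h2β hs]
    nlinarith [hpoly, mul_pos hs hβ, hs]
  refine le_of_forall_pos_le_add fun ε hε => ?_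
  have hs0 : 0 < min 1 (ε / (N + 1)) := lt_min one_pos (by positivity)
  have h2 := key _ hs0 (min_le_left _ _)
  have hsle : min 1 (ε / (N + 1)) ≤ ε / (N + 1) := min_le_right _ _
  have : (min 1 (ε / (N + 1)) / 2) * N ≤ ε := by
    have h3 : min 1 (ε / (N + 1)) * (N + 1) ≤ ε := by
      rw [← le_div_iff₀ (by positivity : (0:ℝ) < N + 1)]; exact hsle
    nlinarith [hs0.le]
  linarith

lemma prox_dist_le (Gv : E → ℝ) (c β : ℝ) (hc : 0 ≤ c) (hβ : 0 < β)
    (hlipv : ∀ a b : E, Gv a - Gv b ≤ c * ‖a - b‖)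
    (z p : E) (hmin : IsMinOn (fun u => Gv u + (1/(2*β)) * ‖z-u‖^2) Set.univ p) :
    ‖z - p‖ ≤ 2 * β * c := by
  have hmem := isMinOn_iff.mp hmin z (Set.mem_univ _)
  simp only [sub_self, norm_zero] at hmem
  have h1 : (1/(2*β)) * ‖z - p‖^2 ≤ Gv z - Gv p := by nlinarith
  have h2 : Gv z - Gv p ≤ c * ‖z - p‖ := hlipv z p
  have h3 : ‖z - p‖^2 ≤ 2 * β * (c * ‖z - p‖) := by
    have := mul_le_mul_of_nonneg_left (h1.trans h2) (le_of_lt (by linarith : (0:ℝ) < 2*β))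
    calc ‖z - p‖^2 = (2*β) * ((1/(2*β)) * ‖z - p‖^2) := by field_simp
      _ ≤ 2 * β * (c * ‖z - p‖) := this
  rcases eq_or_lt_of_le (norm_nonneg (z - p)) with h | h
  · rw [← h]; positivity
  · nlinarith

lemma prox_key (Gv : E → ℝ) (hconv : ConvexOn ℝ Set.univ Gv) (β : ℝ) (hβ : 0 < β)
    (z p : E) (hmin : IsMinOn (fun u => Gv u + (1/(2*β)) * ‖z-u‖^2) Set.univ p)
    (y : E) : ‖p - y‖^2 ≤ ‖z - y‖^2 + 2*β*(Gv y - Gv p) := by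
  have h1 := prox_inner_le Gv hconv β hβ z p hmin y
  have hid : ‖z - y‖^2 = ‖z - p‖^2 + 2 * ⟪z - p, p - y⟫ + ‖p - y‖^2 := by
    have : z - y = (z - p) + (p - y) := by abel
    rw [this, norm_add_sq_real]
  have hinner : (⟪z - p, p - y⟫ : ℝ) = - ⟪z - p, y - p⟫ := by
    rw [← inner_neg_right]; congr 1; abel
  nlinarith [sq_nonneg ‖z - p‖]

end Helpers

private noncomputable def expErr (n m d : ℕ) (hm : 0 < m)
    (X : ℕ → (ℕ → Fin n → Fin m) → EuclideanSpace ℝ (Fin n × Fin d))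
    (xstar : EuclideanSpace ℝ (Fin n × Fin d)) (t : ℕ) : ℝ :=
  (1 / (m : ℝ) ^ (n * t)) *
    ∑ σ : Fin t → Fin n → Fin m,
      ‖X t (fun s i => if h : s < t then σ ⟨s, h⟩ i else ⟨0, hm⟩) - xstar‖ ^ 2

set_option maxHeartbeats 1000000 in
theorem blockprox_convergence_strongly_convex
    (n m d : ℕ) (hn : 0 < n) (hm : 0 < m) (hd : 0 < d)
    (c L μ : ℝ) (hc : 0 ≤ c) (hL : 0 < L) (hμ : 0 < μ)
    (F : EuclideanSpace ℝ (Fin n × Fin d) → ℝ)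
    (gradF : EuclideanSpace ℝ (Fin n × Fin d) → EuclideanSpace ℝ (Fin n × Fin d))
    (hdiff : ∀ x, HasGradientAt F (gradF x) x)
    (hlip : ∀ x y, ‖gradF x - gradF y‖ ≤ L * ‖x - y‖)
    (hsc : ∀ x y, F x + ⟪gradF x, y - x⟫ + (μ / 2) * ‖y - x‖ ^ 2 ≤ F y)
    (Gj : Fin m → EuclideanSpace ℝ (Fin n × Fin d) → ℝ)
    (hGconv : ∀ j, ConvexOn ℝ Set.univ (Gj j))
    (hGlip : ∀ j, LipschitzWith c.toNNReal (Gj j))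
    (H : EuclideanSpace ℝ (Fin n × Fin d) → ℝ)
    (hHdef : ∀ x, H x = F x + ∑ j, Gj j x)
    (xstar : EuclideanSpace ℝ (Fin n × Fin d))
    (hxstar : ∀ y, H xstar ≤ H y)
    (alpha : ℕ → ℝ)
    (halpha : ∀ k : ℕ, alpha k = 2 * μ / (μ ^ 2 * (k : ℝ) + 12 * L ^ 2))
    (prox : Fin m → ℝ → EuclideanSpace ℝ (Fin n × Fin d) → EuclideanSpace ℝ (Fin n × Fin d))
    (hprox : ∀ (j : Fin m) (β : ℝ) (z : EuclideanSpace ℝ (Fin n × Fin d)), 0 < β →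
      IsMinOn (fun u => Gj j u + (1 / (2 * β)) * ‖z - u‖ ^ 2) Set.univ (prox j β z))
    (x0 : EuclideanSpace ℝ (Fin n × Fin d))
    (X : ℕ → (ℕ → Fin n → Fin m) → EuclideanSpace ℝ (Fin n × Fin d))
    (hX0 : ∀ ω, X 0 ω = x0)
    (hXrec : ∀ t ω (i : Fin n) (a : Fin d),
      X (t + 1) ω (i, a)
        = prox (ω t i) ((m : ℝ) * alpha t)
            (X t ω - alpha t • gradF (X t ω)) (i, a))
    (k : ℕ) :
    (1 / (m : ℝ) ^ (n * k)) *
        ∑ σ : Fin k → Fin n → Fin m,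
          ‖X k (fun t i => if h : t < k then σ ⟨t, h⟩ i else ⟨0, hm⟩) - xstar‖ ^ 2
      ≤ (max (max
            (12 * L ^ 2 * ‖x0 - xstar‖ ^ 2)
            ((μ ^ 2 + 12 * L ^ 2) *
              ((1 / (m : ℝ) ^ (n * 1)) *
                ∑ σ : Fin 1 → Fin n → Fin m,
                  ‖X 1 (fun t i => if h : t < 1 then σ ⟨t, h⟩ i else ⟨0, hm⟩) - xstar‖ ^ 2)))
            (4 * (1 + 12 * L ^ 2 / μ ^ 2) * (7 * (m : ℝ) ^ 2 * c ^ 2)))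
        / (μ ^ 2 * (k : ℝ) + 12 * L ^ 2) := by
  show expErr n m d hm X xstar k
      ≤ (max (max (12 * L ^ 2 * ‖x0 - xstar‖ ^ 2)
          ((μ ^ 2 + 12 * L ^ 2) * expErr n m d hm X xstar 1))
          (4 * (1 + 12 * L ^ 2 / μ ^ 2) * (7 * (m : ℝ) ^ 2 * c ^ 2)))
        / (μ ^ 2 * (k : ℝ) + 12 * L ^ 2)
  classical
  -- basic positivity
  have hm' : (0:ℝ) < m := by exact_mod_cast hm
  have hmc0 : (0:ℝ) ≤ (m:ℝ) * c := by positivity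
  -- pointwise Lipschitz bounds for the Gj
  have hGlip' : ∀ (j : Fin m) (a b : EuclideanSpace ℝ (Fin n × Fin d)),
      Gj j a - Gj j b ≤ c * ‖a - b‖ := by
    intro j a b
    have h1 := (hGlip j).dist_le_mul a b
    rw [Real.dist_eq, dist_eq_norm, Real.coe_toNNReal c hc] at h1
    calc Gj j a - Gj j b ≤ |Gj j a - Gj j b| := le_abs_self _
      _ ≤ c * ‖a - b‖ := h1
  -- μ ≤ L
  have hμL : μ ≤ L := by
    set y : EuclideanSpace ℝ (Fin n × Fin d) :=
      EuclideanSpace.single (⟨0, hn⟩, ⟨0, hd⟩) (1:ℝ) with hy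
    have hny : ‖y‖ = 1 := by rw [hy, EuclideanSpace.norm_single]; simp
    have h1 := hsc 0 y
    have h2 := hsc y 0
    have h3 := hlip 0 y
    rw [zero_sub, norm_neg, hny] at h3
    rw [sub_zero, hny] at h1
    rw [zero_sub, norm_neg, hny, inner_neg_right] at h2
    have h4 : (⟪gradF 0 - gradF y, y⟫ : ℝ) = ⟪gradF 0, y⟫ - ⟪gradF y, y⟫ :=
      inner_sub_left _ _ _
    have h5 : (⟪gradF 0 - gradF y, y⟫ : ℝ) ≥ -(L * 1) := by
      have := abs_real_inner_le_norm (gradF 0 - gradF y) y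
      rw [hny, mul_one] at this
      have h6 := abs_le.mp this
      nlinarith [h6.1]
    nlinarith [h5, h4, h1, h2]
  -- gradient at the minimizer is bounded by m c
  have hgstar : ‖gradF xstar‖ ≤ (m:ℝ) * c := by
    rcases eq_or_lt_of_le (norm_nonneg (gradF xstar)) with h0 | h0
    · rw [← h0]; positivity
    set g := gradF xstar with hg
    refine le_of_forall_pos_le_add fun ε hε => ?_
    set t : ℝ := ε / (L * ‖g‖) with ht
    have htpos : 0 < t := by positivity
    set y : EuclideanSpace ℝ (Fin n × Fin d) := xstar - t • g with hy
    have hyx : xstar - y = t • g := by rw [hy]; abel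
    have hxy : ‖y - xstar‖ = t * ‖g‖ := by
      have : y - xstar = -(t • g) := by rw [hy]; abel
      rw [this, norm_neg, norm_smul, Real.norm_eq_abs, abs_of_pos htpos]
    -- strong convexity at y applied to xstar
    have h1 := hsc y xstar
    rw [hyx] at h1
    -- lower bound on the inner product
    have h2 : (⟪gradF y, t • g⟫ : ℝ) ≥ t * ‖g‖^2 - t * (L * (t * ‖g‖)) * ‖g‖ := by
      have ha : (⟪gradF y, t • g⟫ : ℝ) = t * ⟪g, g⟫ + t * ⟪gradF y - g, g⟫ := by
        rw [real_inner_smul_right]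
        have : (⟪gradF y, g⟫ : ℝ) = ⟪g, g⟫ + ⟪gradF y - g, g⟫ := by
          rw [← inner_add_left]; congr 1; abel
        rw [this]; ring
      have hb : (⟪gradF y - g, g⟫ : ℝ) ≥ -(L * (t * ‖g‖) * ‖g‖) := by
        have hcs := abs_real_inner_le_norm (gradF y - g) g
        have hlb := hlip y xstar
        rw [hxy] at hlb
        have := abs_le.mp hcs
        nlinarith [this.1, norm_nonneg g, mul_le_mul_of_nonneg_right hlb (norm_nonneg g)]
      rw [ha, real_inner_self_eq_norm_sq]
      nlinarith [hb, htpos]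
    -- minimality of xstar
    have h3 : F xstar - F y ≤ (m:ℝ) * c * (t * ‖g‖) := by
      have h4 := hxstar y
      rw [hHdef xstar, hHdef y] at h4
      have h5 : ∑ j, Gj j y - ∑ j, Gj j xstar ≤ (m:ℝ) * c * (t * ‖g‖) := by
        rw [← Finset.sum_sub_distrib]
        calc ∑ j, (Gj j y - Gj j xstar) ≤ ∑ _j : Fin m, c * ‖y - xstar‖ :=
              Finset.sum_le_sum fun j _ => hGlip' j y xstar
          _ = (m:ℝ) * (c * ‖y - xstar‖) := by
              rw [Finset.sum_const]; simp [nsmul_eq_mul]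
          _ = (m:ℝ) * c * (t * ‖g‖) := by rw [hxy]; ring
      linarith
    have hnorm2 : ‖t • g‖ = t * ‖g‖ := by
      rw [norm_smul, Real.norm_eq_abs, abs_of_pos htpos]
    rw [hnorm2] at h1
    -- combine: t‖g‖² - L t² ‖g‖² ≤ mc t ‖g‖ + (drop μ-term)
    have h6 : t * ‖g‖^2 - t * (L * (t * ‖g‖)) * ‖g‖ ≤ (m:ℝ) * c * (t * ‖g‖) := by
      have hq : 0 ≤ μ / 2 * (t * ‖g‖) ^ 2 := by positivity
      linarith [h1, h2, h3, hq]
    have h7 : L * t * ‖g‖ = ε := by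
      rw [ht]; field_simp
    -- divide by t‖g‖ > 0
    have h8 : 0 < t * ‖g‖ := mul_pos htpos h0
    have h10 : t * (L * (t * ‖g‖)) * ‖g‖ = (t * ‖g‖) * ε := by rw [← h7]; ring
    have h9 : (t * ‖g‖) * ‖g‖ ≤ (t * ‖g‖) * ((m:ℝ) * c + ε) := by
      linarith [h6, h10]
    exact le_of_mul_le_mul_left h9 h8
  -- ===== pointwise one-step bound =====
  have hstep_pt : ∀ (x : EuclideanSpace ℝ (Fin n × Fin d)) (α : ℝ), 0 < α →
      ∑ v : Fin m, ‖prox v ((m:ℝ)*α) (x - α • gradF x) - xstar‖^2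
        ≤ (m:ℝ) * ((1 - μ*α + 2*L^2*α^2) * ‖x - xstar‖^2
            + 11*(m:ℝ)^2*c^2*α^2) := by
    intro x α hα
    set β : ℝ := (m:ℝ)*α with hβdef
    have hβ : 0 < β := by rw [hβdef]; positivity
    set z : EuclideanSpace ℝ (Fin n × Fin d) := x - α • gradF x with hzdef
    set r := ‖x - xstar‖ with hr
    set g := ‖gradF x‖ with hgd
    have hg0 : 0 ≤ g := norm_nonneg _
    have hr0 : 0 ≤ r := norm_nonneg _
    have hxz : ‖x - z‖ = α * g := by
      have h : x - z = α • gradF x := by rw [hzdef]; abel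
      rw [h, norm_smul, Real.norm_eq_abs, abs_of_pos hα]
    have hper : ∀ v : Fin m, ‖prox v β z - xstar‖^2
        ≤ (‖z - xstar‖^2 + 2*β*(c*(α*g + 2*β*c))) + 2*β*(Gj v xstar - Gj v x) := by
      intro v
      have h1 := prox_key (Gj v) (hGconv v) β hβ z (prox v β z) (hprox v β z hβ) xstar
      have h2 := prox_dist_le (Gj v) c β hc hβ (hGlip' v) z (prox v β z) (hprox v β z hβ)
      have h3 : Gj v x - Gj v (prox v β z) ≤ c * ‖x - prox v β z‖ := hGlip' v _ _
      have h4 : ‖x - prox v β z‖ ≤ α*g + 2*β*c := by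
        calc ‖x - prox v β z‖ = dist x (prox v β z) := (dist_eq_norm _ _).symm
          _ ≤ dist x z + dist z (prox v β z) := dist_triangle _ _ _
          _ = ‖x - z‖ + ‖z - prox v β z‖ := by rw [dist_eq_norm, dist_eq_norm]
          _ ≤ α*g + 2*β*c := by rw [hxz]; linarith [h2]
      have h5 : Gj v xstar - Gj v (prox v β z)
          ≤ (Gj v xstar - Gj v x) + c*(α*g + 2*β*c) := by
        have h6 := mul_le_mul_of_nonneg_left h4 hc
        linarith [h3]
      have h6 : 2*β*(Gj v xstar - Gj v (prox v β z))
          ≤ 2*β*((Gj v xstar - Gj v x) + c*(α*g + 2*β*c)) :=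
        mul_le_mul_of_nonneg_left h5 (by linarith)
      nlinarith [h1, h6]
    have hsum : ∑ v : Fin m, ‖prox v β z - xstar‖^2
        ≤ (m:ℝ) * (‖z - xstar‖^2 + 2*β*(c*(α*g + 2*β*c)))
          + 2*β*(∑ v, (Gj v xstar - Gj v x)) := by
      calc ∑ v : Fin m, ‖prox v β z - xstar‖^2
          ≤ ∑ v : Fin m, ((‖z - xstar‖^2 + 2*β*(c*(α*g + 2*β*c)))
              + 2*β*(Gj v xstar - Gj v x)) := Finset.sum_le_sum fun v _ => hper v
        _ = (m:ℝ) * (‖z - xstar‖^2 + 2*β*(c*(α*g + 2*β*c)))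
              + 2*β*(∑ v, (Gj v xstar - Gj v x)) := by
            rw [Finset.sum_add_distrib, Finset.sum_const, Finset.card_univ,
              Fintype.card_fin, nsmul_eq_mul, ← Finset.mul_sum]
    have hZ : ‖z - xstar‖^2 = r^2 - 2*α*⟪gradF x, x - xstar⟫ + α^2*g^2 := by
      have hzd : z - xstar = (x - xstar) - α • gradF x := by rw [hzdef]; abel
      rw [hzd, norm_sub_sq_real, real_inner_smul_right, norm_smul,
        Real.norm_eq_abs, mul_pow, sq_abs, real_inner_comm, ← hr, ← hgd]
      ring
    have hI : F x - F xstar + μ/2*r^2 ≤ ⟪gradF x, x - xstar⟫ := by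
      have h1 := hsc x xstar
      have h2 : (⟪gradF x, xstar - x⟫:ℝ) = - ⟪gradF x, x - xstar⟫ := by
        rw [← inner_neg_right]; congr 1; abel
      have h3 : ‖xstar - x‖ = r := by rw [hr, norm_sub_rev]
      rw [h2, h3] at h1; linarith
    have hΔ : ∑ v, (Gj v xstar - Gj v x) ≤ F x - F xstar := by
      have h4 := hxstar x; rw [hHdef xstar, hHdef x] at h4
      rw [Finset.sum_sub_distrib]; linarith
    have h6 : (∑ v, (Gj v xstar - Gj v x)) - ⟪gradF x, x - xstar⟫ ≤ -(μ/2)*r^2 := by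
      linarith [hI, hΔ]
    have h7 : 2*(m:ℝ)*α*((∑ v, (Gj v xstar - Gj v x)) - ⟪gradF x, x - xstar⟫)
        ≤ 2*(m:ℝ)*α*(-(μ/2)*r^2) :=
      mul_le_mul_of_nonneg_left h6 (by positivity)
    have hgle : g ≤ L*r + (m:ℝ)*c := by
      calc g = ‖(gradF x - gradF xstar) + gradF xstar‖ := by
            rw [hgd]; congr 1; abel
        _ ≤ ‖gradF x - gradF xstar‖ + ‖gradF xstar‖ := norm_add_le _ _
        _ ≤ L*r + (m:ℝ)*c := by
            have := hlip x xstar; rw [← hr] at this; linarith [hgstar]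
    have hq : g^2 + 2*(m:ℝ)*c*g + 4*(m:ℝ)^2*c^2 ≤ 2*L^2*r^2 + 11*(m:ℝ)^2*c^2 := by
      nlinarith [mul_le_mul hgle hgle hg0 (by positivity : (0:ℝ) ≤ L*r + (m:ℝ)*c),
        mul_le_mul_of_nonneg_left hgle (by positivity : (0:ℝ) ≤ 2*(m:ℝ)*c),
        sq_nonneg (L*r - 2*(m:ℝ)*c)]
    have hq2 : (m:ℝ)*α^2 * (g^2 + 2*(m:ℝ)*c*g + 4*(m:ℝ)^2*c^2)
        ≤ (m:ℝ)*α^2 * (2*L^2*r^2 + 11*(m:ℝ)^2*c^2) :=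
      mul_le_mul_of_nonneg_left hq (by positivity)
    rw [hZ] at hsum
    rw [hβdef] at hsum
    nlinarith [hsum, h7, hq2]
  -- ===== X depends only on the past =====
  have hXdep : ∀ (t : ℕ) (ω ω' : ℕ → Fin n → Fin m),
      (∀ s, s < t → ω s = ω' s) → X t ω = X t ω' := by
    intro t
    induction t with
    | zero => intro ω ω' _; rw [hX0, hX0]
    | succ t ih =>
      intro ω ω' hag
      have ht := ih ω ω' (fun s hs => hag s (Nat.lt_succ_of_lt hs))
      ext p
      obtain ⟨i, a⟩ := p
      rw [hXrec t ω i a, hXrec t ω' i a, ht, hag t (Nat.lt_succ_self t)]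
  -- ===== expectation recursion =====
  have hE0 : expErr n m d hm X xstar 0 = ‖x0 - xstar‖^2 := by
    simp [expErr, hX0]
  have hEnn : ∀ t, 0 ≤ expErr n m d hm X xstar t := by
    intro t
    exact mul_nonneg (by positivity) (Finset.sum_nonneg fun _ _ => sq_nonneg _)
  have hαpos : ∀ t : ℕ, 0 < alpha t := by
    intro t; rw [halpha]; positivity
  have hestep : ∀ t : ℕ, expErr n m d hm X xstar (t+1)
      ≤ (1 - μ*alpha t + 2*L^2*(alpha t)^2) * expErr n m d hm X xstar t
        + 11*(m:ℝ)^2*c^2*(alpha t)^2 := by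
    intro t
    have hα := hαpos t
    -- reindexing bijection
    have hbij : Function.Bijective
        (fun q : (Fin t → Fin n → Fin m) × (Fin n → Fin m) =>
          (Fin.snoc q.1 q.2 : Fin (t+1) → Fin n → Fin m)) := by
      constructor
      · intro a b hab
        have h1 : a.1 = b.1 := by
          have h := congrArg Fin.init hab
          simpa only [Fin.init_snoc] using h
        have h2 : a.2 = b.2 := by
          have h := congrFun hab (Fin.last t)
          simpa only [Fin.snoc_last] using h
        exact Prod.ext h1 h2
      · intro σ; exact ⟨(Fin.init σ, σ (Fin.last t)), Fin.snoc_init_self σ⟩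
    have hre := Fintype.sum_bijective _ hbij
      (fun q : (Fin t → Fin n → Fin m) × (Fin n → Fin m) =>
        ‖X (t+1) (fun s i => if h : s < t+1
            then (Fin.snoc q.1 q.2 : Fin (t+1) → Fin n → Fin m) ⟨s,h⟩ i else ⟨0,hm⟩)
          - xstar‖^2)
      (fun σ : Fin (t+1) → Fin n → Fin m =>
        ‖X (t+1) (fun s i => if h : s < t+1 then σ ⟨s,h⟩ i else ⟨0,hm⟩) - xstar‖^2)
      (fun q => rfl)
    -- evaluation of one inner term
    have hval : ∀ (σ' : Fin t → Fin n → Fin m) (j : Fin n → Fin m),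
        ‖X (t+1) (fun s i => if h : s < t+1
            then (Fin.snoc σ' j : Fin (t+1) → Fin n → Fin m) ⟨s,h⟩ i else ⟨0,hm⟩)
          - xstar‖^2
        = ∑ p : Fin n × Fin d,
            (prox (j p.1) ((m:ℝ)*alpha t)
              (X t (fun s i => if h : s < t then σ' ⟨s,h⟩ i else ⟨0,hm⟩)
                - alpha t • gradF (X t (fun s i => if h : s < t then σ' ⟨s,h⟩ i else ⟨0,hm⟩)))
              p - xstar p)^2 := by
      intro σ' j
      set ω : ℕ → Fin n → Fin m := (fun s i => if h : s < t+1
          then (Fin.snoc σ' j : Fin (t+1) → Fin n → Fin m) ⟨s,h⟩ i else ⟨0,hm⟩) with hω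
      set ω' : ℕ → Fin n → Fin m :=
        (fun s i => if h : s < t then σ' ⟨s,h⟩ i else ⟨0,hm⟩) with hω'
      have hXt : X t ω = X t ω' := by
        apply hXdep; intro s hs; funext i
        rw [hω, hω']; dsimp only
        rw [dif_pos (Nat.lt_succ_of_lt hs), dif_pos hs]
        have hcast : (⟨s, Nat.lt_succ_of_lt hs⟩ : Fin (t+1)) = Fin.castSucc ⟨s, hs⟩ := rfl
        rw [hcast, Fin.snoc_castSucc]
      have hωt : ∀ i : Fin n, ω t i = j i := by
        intro i
        rw [hω]; dsimp only
        rw [dif_pos (Nat.lt_succ_self t)]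
        have hlast : (⟨t, Nat.lt_succ_self t⟩ : Fin (t+1)) = Fin.last t := rfl
        rw [hlast, Fin.snoc_last]
      have hXt1 : ∀ (i : Fin n) (a : Fin d), X (t+1) ω (i,a)
          = prox (j i) ((m:ℝ)*alpha t) (X t ω' - alpha t • gradF (X t ω')) (i,a) := by
        intro i a
        rw [hXrec t ω i a, hωt i, hXt]
      rw [norm_sq_coord]
      refine Finset.sum_congr rfl fun p _ => ?_
      obtain ⟨i, a⟩ := p
      rw [PiLp.sub_apply, hXt1 i a]
    -- cardinality and powers
    have hMcard : ((Fintype.card (Fin t → Fin n → Fin m)) : ℝ) = (m:ℝ)^(n*t) := by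
      rw [Fintype.card_fun, Fintype.card_fun, Fintype.card_fin, Fintype.card_fin,
        Fintype.card_fin]
      push_cast
      rw [← pow_mul]
    have hpow : (m:ℝ)^(n*(t+1)) = (m:ℝ)^(n*t) * ((m:ℝ)^(n-1) * m) := by
      have h1 : n*(t+1) = n*t + (n-1) + 1 := by rw [Nat.mul_succ]; omega
      rw [h1, pow_succ, pow_add]; ring
    -- rewrite expErr (t+1)
    have e1 : expErr n m d hm X xstar (t+1)
        = (1/(m:ℝ)^(n*(t+1))) * ∑ σ' : Fin t → Fin n → Fin m, ∑ j : Fin n → Fin m,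
            ∑ p : Fin n × Fin d,
              (prox (j p.1) ((m:ℝ)*alpha t)
                (X t (fun s i => if h : s < t then σ' ⟨s,h⟩ i else ⟨0,hm⟩)
                  - alpha t • gradF (X t (fun s i => if h : s < t then σ' ⟨s,h⟩ i else ⟨0,hm⟩)))
                p - xstar p)^2 := by
      show (1/(m:ℝ)^(n*(t+1))) *
          ∑ σ : Fin (t+1) → Fin n → Fin m,
            ‖X (t+1) (fun s i => if h : s < t+1 then σ ⟨s,h⟩ i else ⟨0,hm⟩) - xstar‖^2 = _
      rw [← hre, Fintype.sum_prod_type]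
      congr 1
      exact Finset.sum_congr rfl fun σ' _ => Finset.sum_congr rfl fun j _ => hval σ' j
    -- exchange the sums inside
    have e2 : ∀ σ' : Fin t → Fin n → Fin m,
        ∑ j : Fin n → Fin m, ∑ p : Fin n × Fin d,
            (prox (j p.1) ((m:ℝ)*alpha t)
              (X t (fun s i => if h : s < t then σ' ⟨s,h⟩ i else ⟨0,hm⟩)
                - alpha t • gradF (X t (fun s i => if h : s < t then σ' ⟨s,h⟩ i else ⟨0,hm⟩)))
              p - xstar p)^2
        = (m:ℝ)^(n-1) * ∑ v : Fin m,
            ‖prox v ((m:ℝ)*alpha t)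
              (X t (fun s i => if h : s < t then σ' ⟨s,h⟩ i else ⟨0,hm⟩)
                - alpha t • gradF (X t (fun s i => if h : s < t then σ' ⟨s,h⟩ i else ⟨0,hm⟩)))
              - xstar‖^2 := by
      intro σ'
      rw [Finset.sum_comm]
      set w := X t (fun s i => if h : s < t then σ' ⟨s,h⟩ i else ⟨0,hm⟩)
        - alpha t • gradF (X t (fun s i => if h : s < t then σ' ⟨s,h⟩ i else ⟨0,hm⟩)) with hw
      calc ∑ p : Fin n × Fin d, ∑ j : Fin n → Fin m,
            (prox (j p.1) ((m:ℝ)*alpha t) w p - xstar p)^2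
          = ∑ p : Fin n × Fin d, (m:ℝ)^(n-1) * ∑ v,
              (prox v ((m:ℝ)*alpha t) w p - xstar p)^2 :=
            Finset.sum_congr rfl fun p _ =>
              sum_fun_eval p.1 (fun v => (prox v ((m:ℝ)*alpha t) w p - xstar p)^2)
        _ = (m:ℝ)^(n-1) * ∑ v : Fin m, ∑ p : Fin n × Fin d,
              (prox v ((m:ℝ)*alpha t) w p - xstar p)^2 := by
            rw [← Finset.mul_sum, Finset.sum_comm]
        _ = (m:ℝ)^(n-1) * ∑ v : Fin m, ‖prox v ((m:ℝ)*alpha t) w - xstar‖^2 := by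
            congr 1
            refine Finset.sum_congr rfl fun v _ => ?_
            rw [norm_sq_coord]
            exact Finset.sum_congr rfl fun p _ => by rw [PiLp.sub_apply]
    -- apply the pointwise bound and assemble
    have e3 : ∀ σ' : Fin t → Fin n → Fin m,
        ∑ v : Fin m, ‖prox v ((m:ℝ)*alpha t)
            (X t (fun s i => if h : s < t then σ' ⟨s,h⟩ i else ⟨0,hm⟩)
              - alpha t • gradF (X t (fun s i => if h : s < t then σ' ⟨s,h⟩ i else ⟨0,hm⟩)))
            - xstar‖^2
        ≤ (m:ℝ) * ((1 - μ*alpha t + 2*L^2*(alpha t)^2)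
            * ‖X t (fun s i => if h : s < t then σ' ⟨s,h⟩ i else ⟨0,hm⟩) - xstar‖^2
            + 11*(m:ℝ)^2*c^2*(alpha t)^2) :=
      fun σ' => hstep_pt _ (alpha t) hα
    rw [e1]
    calc (1/(m:ℝ)^(n*(t+1))) * ∑ σ' : Fin t → Fin n → Fin m, ∑ j : Fin n → Fin m,
          ∑ p : Fin n × Fin d,
            (prox (j p.1) ((m:ℝ)*alpha t)
              (X t (fun s i => if h : s < t then σ' ⟨s,h⟩ i else ⟨0,hm⟩)
                - alpha t • gradF (X t (fun s i => if h : s < t then σ' ⟨s,h⟩ i else ⟨0,hm⟩)))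
              p - xstar p)^2
        ≤ (1/(m:ℝ)^(n*(t+1))) * ∑ σ' : Fin t → Fin n → Fin m,
            ((m:ℝ)^(n-1) * ((m:ℝ) * ((1 - μ*alpha t + 2*L^2*(alpha t)^2)
              * ‖X t (fun s i => if h : s < t then σ' ⟨s,h⟩ i else ⟨0,hm⟩) - xstar‖^2
              + 11*(m:ℝ)^2*c^2*(alpha t)^2))) := by
          refine mul_le_mul_of_nonneg_left (Finset.sum_le_sum fun σ' _ => ?_) (by positivity)
          rw [e2 σ']
          exact mul_le_mul_of_nonneg_left (e3 σ') (by positivity)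
      _ = (1 - μ*alpha t + 2*L^2*(alpha t)^2) * expErr n m d hm X xstar t
            + 11*(m:ℝ)^2*c^2*(alpha t)^2 := by
          have hC : ∀ σ' : Fin t → Fin n → Fin m,
              (m:ℝ)^(n-1) * ((m:ℝ) * ((1 - μ*alpha t + 2*L^2*(alpha t)^2)
                * ‖X t (fun s i => if h : s < t then σ' ⟨s,h⟩ i else ⟨0,hm⟩) - xstar‖^2
                + 11*(m:ℝ)^2*c^2*(alpha t)^2))
              = ((m:ℝ)^(n-1) * (m:ℝ) * (1 - μ*alpha t + 2*L^2*(alpha t)^2))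
                  * ‖X t (fun s i => if h : s < t then σ' ⟨s,h⟩ i else ⟨0,hm⟩) - xstar‖^2
                + (m:ℝ)^(n-1) * (m:ℝ) * (11*(m:ℝ)^2*c^2*(alpha t)^2) := fun σ' => by ring
          rw [Finset.sum_congr rfl (fun σ' _ => hC σ')]
          rw [Finset.sum_add_distrib, Finset.sum_const, Finset.card_univ, nsmul_eq_mul,
            hMcard, ← Finset.mul_sum]
          rw [hpow, show (expErr n m d hm X xstar t : ℝ)
              = (1/(m:ℝ)^(n*t)) * ∑ σ' : Fin t → Fin n → Fin m,
                  ‖X t (fun s i => if h : s < t then σ' ⟨s,h⟩ i else ⟨0,hm⟩) - xstar‖^2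
              from rfl]
          have hmne : (m:ℝ) ≠ 0 := ne_of_gt hm'
          have h1 : ((m:ℝ)^(n*t)) ≠ 0 := by positivity
          have h2 : ((m:ℝ)^(n-1)) ≠ 0 := by positivity
          field_simp
  -- ===== the constant A =====
  set A : ℝ := max (max (12 * L ^ 2 * ‖x0 - xstar‖ ^ 2)
      ((μ ^ 2 + 12 * L ^ 2) * expErr n m d hm X xstar 1))
      (4 * (1 + 12 * L ^ 2 / μ ^ 2) * (7 * (m : ℝ) ^ 2 * c ^ 2)) with hA
  have hμ2L2 : μ^2 ≤ L^2 := by nlinarith [hμL, hμ, hL]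
  have hA364 : 364*(m:ℝ)^2*c^2 ≤ A := by
    have h1 : (13:ℝ) ≤ 1 + 12*L^2/μ^2 := by
      have h2 : (1:ℝ) ≤ L^2/μ^2 := by
        rw [le_div_iff₀ (by positivity)]; linarith
      have h3 : 12*L^2/μ^2 = 12*(L^2/μ^2) := by ring
      rw [h3]; linarith
    have h3 : 364*(m:ℝ)^2*c^2 ≤ 4 * (1 + 12 * L ^ 2 / μ ^ 2) * (7 * (m : ℝ) ^ 2 * c ^ 2) := by
      nlinarith [h1, sq_nonneg ((m:ℝ)*c), sq_nonneg c, hm'.le]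
    exact h3.trans (le_max_right _ _)
  have hA0 : 0 ≤ A := le_trans (by positivity) hA364
  -- ===== induction =====
  have hmain : ∀ t : ℕ, expErr n m d hm X xstar t ≤ A / (μ^2*(t:ℝ) + 12*L^2) := by
    intro t
    induction t with
    | zero =>
      rw [hE0]
      have h1 : 12 * L ^ 2 * ‖x0 - xstar‖ ^ 2 ≤ A :=
        le_trans (le_max_left _ _) (le_max_left _ _)
      rw [Nat.cast_zero, le_div_iff₀ (by positivity)]
      nlinarith [h1]
    | succ t ih =>
      obtain ⟨D, hD⟩ : ∃ D : ℝ, D = μ^2*(t:ℝ) + 12*L^2 := ⟨_, rfl⟩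
      rw [← hD] at ih
      have hD12 : 12*L^2 ≤ D := by
        rw [hD]
        have ht0 : (0:ℝ) ≤ (t:ℝ) := Nat.cast_nonneg t
        nlinarith only [sq_nonneg μ, ht0]
      have hDpos : 0 < D := by nlinarith only [hD12, hL]
      have hD2pos : 0 < D + μ^2 := by positivity
      have halt : alpha t = 2*μ/D := by rw [halpha, ← hD]
      have hstep := hestep t
      rw [halt] at hstep
      have hμ2D : 2*μ^2 ≤ D := by nlinarith only [hμ2L2, hD12]
      have hcoef0 : 0 ≤ 1 - μ*(2*μ/D) + 2*L^2*(2*μ/D)^2 := by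
        have h1 : μ*(2*μ/D) ≤ 1 := by
          have e : μ*(2*μ/D) = 2*μ^2/D := by ring
          rw [e, div_le_one hDpos]
          linarith only [hμ2D]
        have h2 : 0 ≤ 2*L^2*(2*μ/D)^2 := by positivity
        linarith
      -- combine with induction hypothesis
      have hih : (1 - μ*(2*μ/D) + 2*L^2*(2*μ/D)^2) * expErr n m d hm X xstar t
          ≤ (1 - μ*(2*μ/D) + 2*L^2*(2*μ/D)^2) * (A / D) :=
        mul_le_mul_of_nonneg_left ih hcoef0
      have hstep2 : expErr n m d hm X xstar (t+1)
          ≤ (1 - μ*(2*μ/D) + 2*L^2*(2*μ/D)^2) * (A / D) + 11*(m:ℝ)^2*c^2*(2*μ/D)^2 := by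
        linarith only [hstep, hih]
      -- arithmetic: show the RHS is at most A / (D + μ²)
      have hAD0 : 0 ≤ A / D := div_nonneg hA0 hDpos.le
      have c1 : 1 - μ*(2*μ/D) + 2*L^2*(2*μ/D)^2 ≤ 1 - (4/3)*(μ^2/D) := by
        have h1 : 2*L^2*(2*μ/D)^2 = (8*L^2/D)*(μ^2/D) := by
          field_simp; ring
        have h2 : (8*L^2/D) ≤ 2/3 := by
          rw [div_le_iff₀ hDpos]; linarith only [hD12]
        have h3 : (8*L^2/D)*(μ^2/D) ≤ (2/3)*(μ^2/D) :=
          mul_le_mul_of_nonneg_right h2 (by positivity)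
        have h4 : μ*(2*μ/D) = 2*(μ^2/D) := by field_simp
        rw [h1, h4]; linarith
      have c2 : (1 - μ*(2*μ/D) + 2*L^2*(2*μ/D)^2) * (A / D)
          ≤ (1 - (4/3)*(μ^2/D)) * (A / D) :=
        mul_le_mul_of_nonneg_right c1 hAD0
      have c3 : 11*(m:ℝ)^2*c^2*(2*μ/D)^2 ≤ (1/3)*A*μ^2/D^2 := by
        have h1 : 11*(m:ℝ)^2*c^2*(2*μ/D)^2 = (44*(m:ℝ)^2*c^2)*(μ^2/D^2) := by
          field_simp; ring
        have h2 : (1/3)*A*μ^2/D^2 = ((1/3)*A)*(μ^2/D^2) := by ring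
        rw [h1, h2]
        refine mul_le_mul_of_nonneg_right ?_ (by positivity)
        linarith only [hA364, sq_nonneg ((m:ℝ)*c)]
      have c4 : (1 - (4/3)*(μ^2/D)) * (A / D) + (1/3)*A*μ^2/D^2 = A/D - A*μ^2/D^2 := by
        field_simp
        ring
      have c5 : A/D - A*μ^2/D^2 ≤ A/(D+μ^2) := by
        rw [div_sub_div _ _ (ne_of_gt hDpos) (by positivity : (D:ℝ)^2 ≠ 0),
          div_le_div_iff₀ (by positivity) hD2pos]
        nlinarith only [mul_nonneg (mul_nonneg hA0 hDpos.le) (pow_nonneg hμ.le 4),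
          sq_nonneg μ, hDpos]
      have hcast : μ^2*((t:ℕ)+1 : ℝ) + 12*L^2 = D + μ^2 := by
        rw [hD]; push_cast; ring
      have : expErr n m d hm X xstar (t+1) ≤ A/(D+μ^2) := by
        linarith only [hstep2, c2, c3, c4, c5]
      calc expErr n m d hm X xstar (t+1) ≤ A/(D+μ^2) := this
        _ = A / (μ^2*((t+1 : ℕ):ℝ) + 12*L^2) := by rw [show ((t+1:ℕ):ℝ) = (t:ℝ)+1 by push_cast; ring]; rw [hcast]
  have hfinal := hmain k
  have hgoal : μ ^ 2 * (k : ℝ) + 12 * L ^ 2 = μ^2*(k:ℝ) + 12*L^2 := rfl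
  exact hfinal
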